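/- arXiv:1806.04889 — 4 statements merged into one kernel-verified Lean document; each statement's English description precedes it below -/
import Mathlib

section
/- For γ ∈ (0,1), δ ≠ 0, σ > 0 and T > 0, the function V_Z²(s,t) = (σ²/(2δ)) · ((1 − e^{−2δt}) − γ(2−γ)(1 − e^{−2δs})) / (1 − γ + γe^{−δs})² on the set B = {(s,t) : 0 ≤ s ≤ t ≤ T} attains its unique global maximum at the point (s,t) = (0,T), with maximal value a² = (σ²/(2δ))(1 − e^{−2δT}). -/
private lemma varZ_aux (σ δ g A E D : ℝ) (hσ : 0 < σ) (hδ : δ ≠ 0) (hg : 0 < g)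
    (hD : D = g ^ 2 * (1 - E) - A) (hDδ : 0 < D * δ) :
    σ ^ 2 / (2 * δ * g ^ 2) * A < σ ^ 2 / (2 * δ) * (1 - E) := by
  have heq : σ ^ 2 / (2 * δ) * (1 - E) - σ ^ 2 / (2 * δ * g ^ 2) * A =
      σ ^ 2 * (D * δ) / (2 * δ ^ 2 * g ^ 2) := by
    subst hD
    field_simp
  have hpos : 0 < σ ^ 2 * (D * δ) / (2 * δ ^ 2 * g ^ 2) := by positivity
  linarith

set_option maxHeartbeats 1000000 in
/-- The variance function `V_Z²(s,t)` of the tax risk model attains its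
unique global maximum on `B = {(s,t) : 0 ≤ s ≤ t ≤ T}` at `(0,T)`, with maximal
value `a² = (σ²/(2δ))(1 − e^{−2δT})`. -/
theorem varZ_unique_max (γ δ σ T : ℝ) (hγ : γ ∈ Set.Ioo (0:ℝ) 1) (hδ : δ ≠ 0)
    (hσ : 0 < σ) (hT : 0 < T) (V2 : ℝ → ℝ → ℝ)
    (hV2 : ∀ s t : ℝ, V2 s t =
      σ ^ 2 / (2 * δ * (1 - γ + γ * Real.exp (-δ * s)) ^ 2) *
        ((1 - Real.exp (-2 * δ * t)) - γ * (2 - γ) * (1 - Real.exp (-2 * δ * s)))) :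
    V2 0 T = σ ^ 2 / (2 * δ) * (1 - Real.exp (-2 * δ * T)) ∧
      ∀ s t : ℝ, 0 ≤ s → s ≤ t → t ≤ T → (s, t) ≠ ((0 : ℝ), T) →
        V2 s t < V2 0 T := by
  obtain ⟨hγ0, hγ1⟩ := hγ
  have hV0T : V2 0 T = σ ^ 2 / (2 * δ) * (1 - Real.exp (-2 * δ * T)) := by
    rw [hV2]
    norm_num
  refine ⟨hV0T, ?_⟩
  intro s t hs hst htT hne
  rw [hV2, hV0T]
  have hxs : Real.exp (-2 * δ * s) = (Real.exp (-δ * s)) ^ 2 := by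
    rw [show (-2 * δ * s) = (-δ * s) + (-δ * s) by ring, Real.exp_add, sq]
  rw [hxs]
  obtain ⟨x, hxdef⟩ : ∃ x, Real.exp (-δ * s) = x := ⟨_, rfl⟩
  obtain ⟨u, hudef⟩ : ∃ u, Real.exp (-2 * δ * t) = u := ⟨_, rfl⟩
  obtain ⟨E, hEdef⟩ : ∃ E, Real.exp (-2 * δ * T) = E := ⟨_, rfl⟩
  rw [hxdef, hudef, hEdef]
  have hx0 : 0 < x := hxdef ▸ Real.exp_pos _
  have hE0 : 0 < E := hEdef ▸ Real.exp_pos _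
  have hu0 : 0 < u := hudef ▸ Real.exp_pos _
  have hg : 0 < 1 - γ + γ * x := by nlinarith
  have hne' : s ≠ 0 ∨ t ≠ T := by
    by_contra h
    push_neg at h
    exact hne (by simp [h.1, h.2])
  have hDδ : 0 < ((1 - γ + γ * x) ^ 2 * (1 - E) -
      ((1 - u) - γ * (2 - γ) * (1 - x ^ 2))) * δ := by
    rcases lt_or_gt_of_ne hδ with hδneg | hδpos
    · -- δ < 0 : inner factor is negative
      have hE1 : 1 < E := by
        rw [← hEdef]
        calc (1:ℝ) = Real.exp 0 := by simp
          _ < Real.exp (-2 * δ * T) := Real.exp_lt_exp.mpr (by nlinarith)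
      have huE : u ≤ E := by
        rw [← hudef, ← hEdef]
        exact Real.exp_le_exp.mpr (by nlinarith)
      have hD : (1 - γ + γ * x) ^ 2 * (1 - E) -
          ((1 - u) - γ * (2 - γ) * (1 - x ^ 2)) < 0 := by
        rcases hs.lt_or_eq with hs0 | hs0
        · have hx1' : 1 < x := by
            rw [← hxdef]
            calc (1:ℝ) = Real.exp 0 := by simp
              _ < Real.exp (-δ * s) := Real.exp_lt_exp.mpr (by nlinarith)
          have hP : 0 < γ * x * E + 2 * (1 - γ) * x + (2 - γ) * E := by nlinarith
          have hprod := mul_pos (mul_pos hγ0 (by linarith : (0:ℝ) < x - 1)) hP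
          nlinarith
        · have hxeq : x = 1 := by rw [← hxdef, ← hs0]; simp
          have htT' : t < T := lt_of_le_of_ne htT (by
            rcases hne' with h | h
            · exact absurd hs0.symm h
            · exact h)
          have huE' : u < E := by
            rw [← hudef, ← hEdef]
            exact Real.exp_lt_exp.mpr (by nlinarith)
          rw [hxeq]; nlinarith
      exact mul_pos_of_neg_of_neg hD hδneg
    · -- δ > 0 : inner factor is positive
      have hE1 : E < 1 := by
        rw [← hEdef]
        calc Real.exp (-2 * δ * T) < Real.exp 0 := Real.exp_lt_exp.mpr (by nlinarith)
          _ = 1 := by simp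
      have huE : E ≤ u := by
        rw [← hudef, ← hEdef]
        exact Real.exp_le_exp.mpr (by nlinarith)
      have hD : 0 < (1 - γ + γ * x) ^ 2 * (1 - E) -
          ((1 - u) - γ * (2 - γ) * (1 - x ^ 2)) := by
        rcases hs.lt_or_eq with hs0 | hs0
        · have hx1' : x < 1 := by
            rw [← hxdef]
            calc Real.exp (-δ * s) < Real.exp 0 := Real.exp_lt_exp.mpr (by nlinarith)
              _ = 1 := by simp
          have h3 : 0 < 2 * γ * (1 - γ) * (x * (1 - x)) * (1 - E) :=
            mul_pos (mul_pos (mul_pos (by linarith : (0:ℝ) < 2 * γ)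
              (by linarith : (0:ℝ) < 1 - γ))
              (mul_pos hx0 (by linarith : (0:ℝ) < 1 - x)))
              (by linarith : (0:ℝ) < 1 - E)
          have h2 : 0 ≤ γ * (2 - γ) * (1 - x ^ 2) * E :=
            mul_nonneg (mul_nonneg (mul_nonneg hγ0.le (by linarith))
              (by nlinarith)) hE0.le
          nlinarith
        · have hxeq : x = 1 := by rw [← hxdef, ← hs0]; simp
          have htT' : t < T := lt_of_le_of_ne htT (by
            rcases hne' with h | h
            · exact absurd hs0.symm h
            · exact h)
          have huE' : E < u := by
            rw [← hudef, ← hEdef]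
            exact Real.exp_lt_exp.mpr (by nlinarith)
          rw [hxeq]; nlinarith
      exact mul_pos hD hδpos
  exact varZ_aux σ δ (1 - γ + γ * x) ((1 - u) - γ * (2 - γ) * (1 - x ^ 2)) E _
    hσ hδ hg rfl hDδ
end

section
/- For γ ∈ (0,1), δ > 0, σ > 0, c > 0 and u sufficiently large, the function F_u(s,t) = V_Z(s,t)/G_u(s,t), where V_Z²(s,t) = (σ²/(2δ))((1−t) − γ(2−γ)(1−s)) and G_u(s,t) = u − γ(u + c/δ)(1 − s^{1/2}) + (c/δ)(1 − t^{1/2}), defined on {(s,t) : 0 < t ≤ s ≤ 1}, attains its maximum at the unique point (s,t) = (1, t_u) where t_u = (c/(δu + c))². -/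
set_option maxHeartbeats 1600000 in
/-- For `γ ∈ (0,1)`, `δ, σ, c > 0` and `u` sufficiently large, the function
`F_u(s,t) = V_Z(s,t)/G_u(s,t)` on `{(s,t) : 0 < t ≤ s ≤ 1}` attains its maximum at the
unique point `(1, t_u)` with `t_u = (c/(δu+c))²`. -/
theorem Fu_unique_max (γ δ σ c : ℝ) (hγ : γ ∈ Set.Ioo (0:ℝ) 1) (hδ : 0 < δ)
    (hσ : 0 < σ) (hc : 0 < c)
    (V : ℝ → ℝ → ℝ) (G : ℝ → ℝ → ℝ → ℝ) (F : ℝ → ℝ → ℝ → ℝ) (tu : ℝ → ℝ)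
    (hV : ∀ s t : ℝ, V s t =
      Real.sqrt (σ ^ 2 / (2 * δ) * ((1 - t) - γ * (2 - γ) * (1 - s))))
    (hG : ∀ u s t : ℝ, G u s t =
      u - γ * (u + c / δ) * (1 - Real.sqrt s) + c / δ * (1 - Real.sqrt t))
    (hF : ∀ u s t : ℝ, F u s t = V s t / G u s t)
    (htu : ∀ u : ℝ, tu u = (c / (δ * u + c)) ^ 2) :
    ∃ u₀ : ℝ, ∀ u : ℝ, u₀ ≤ u →
      ∀ s t : ℝ, 0 < t → t ≤ s → s ≤ 1 → (s, t) ≠ ((1 : ℝ), tu u) →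
        F u s t < F u 1 (tu u) := by
  obtain ⟨hγ0, hγ1⟩ := hγ
  have hk0 : 0 < c / δ := div_pos hc hδ
  set k := c / δ with hkdef
  clear_value k
  have h1γ : 0 < 1 - γ := by linarith
  refine ⟨(γ * k + 1) / (1 - γ) + 1, ?_⟩
  intro u hu s t ht hts hs1 hne
  have hkey : γ * k + 1 ≤ (u - 1) * (1 - γ) := by
    have h1 : (γ * k + 1) / (1 - γ) ≤ u - 1 := by linarith
    exact (div_le_iff₀ h1γ).mp h1
  have hu0 : 0 < u := by nlinarith
  set M := u + k with hMdef
  clear_value M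
  have hM0 : 0 < M := by rw [hMdef]; positivity
  have hkM : k < M := by linarith
  set a := Real.sqrt s with hadef
  set b := Real.sqrt t with hbdef
  have hs0 : 0 < s := lt_of_lt_of_le ht hts
  have ha0 : 0 < a := Real.sqrt_pos.mpr hs0
  have hb0 : 0 < b := Real.sqrt_pos.mpr ht
  have ha1 : a ≤ 1 := Real.sqrt_le_one.mpr hs1
  have hsa : a ^ 2 = s := Real.sq_sqrt hs0.le
  have htb : b ^ 2 = t := Real.sq_sqrt ht.le
  have hba : b ≤ a := Real.sqrt_le_sqrt hts
  clear_value a b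
  have hcM : c / (δ * u + c) = k / M := by
    have hδu : (0:ℝ) < δ * u + c := by positivity
    rw [hkdef, hMdef, hkdef, div_eq_div_iff hδu.ne' (by positivity : u + c / δ ≠ 0)]
    field_simp
  have htu1 : tu u = (k / M) ^ 2 := by rw [htu, hcM]
  have hbM0 : 0 < k / M := div_pos hk0 hM0
  have hGst : G u s t = M * (1 - γ + γ * a) - k * b := by
    rw [hG, ← hadef, ← hbdef, hMdef]; ring
  have hGpos : 0 < G u s t := by
    rw [hGst]
    have hb1 : b ≤ 1 := le_trans hba ha1
    nlinarith [mul_pos (mul_pos hγ0 hM0) ha0]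
  have hGtop : G u 1 (tu u) = M - k ^ 2 / M := by
    rw [hG, Real.sqrt_one, htu1, Real.sqrt_sq hbM0.le, hMdef]
    field_simp
    ring
  have hGtop_pos : 0 < G u 1 (tu u) := by
    rw [hGtop]
    have : k ^ 2 / M < M := by
      rw [div_lt_iff₀ hM0]; nlinarith
    linarith
  have hAstar : 0 < 1 - tu u := by
    rw [htu1]
    have h2 : k / M < 1 := (div_lt_one hM0).mpr hkM
    have h3 : (k / M) ^ 2 < 1 := pow_lt_one₀ hbM0.le h2 (by norm_num)
    linarith
  set C := σ ^ 2 / (2 * δ) with hCdef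
  clear_value C
  have hC0 : 0 < C := by rw [hCdef]; positivity
  have hGid : (G u 1 (tu u)) ^ 2 = u * (u + 2 * k) * (1 - tu u) := by
    rw [hGtop, htu1, hMdef]
    field_simp
    ring
  have hF_rhs : F u 1 (tu u) = Real.sqrt (C * (1 - tu u)) / G u 1 (tu u) := by
    rw [hF, hV, hCdef]
    congr 2
    ring
  have hRHSpos : 0 < F u 1 (tu u) := by
    rw [hF_rhs]
    exact div_pos (Real.sqrt_pos.mpr (mul_pos hC0 hAstar)) hGtop_pos
  set A := (1 - t) - γ * (2 - γ) * (1 - s) with hAdef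
  clear_value A
  have hF_lhs : F u s t = Real.sqrt (C * A) / G u s t := by
    rw [hF, hV, hCdef, hAdef]
  rcases le_or_gt A 0 with hA | hA
  · have hz : F u s t = 0 := by
      rw [hF_lhs, Real.sqrt_eq_zero_of_nonpos
        (mul_nonpos_of_nonneg_of_nonpos hC0.le hA), zero_div]
    rw [hz]; exact hRHSpos
  · -- main case
    have hmain : A * (u * (u + 2 * k)) < (G u s t) ^ 2 := by
      have hid : (G u s t) ^ 2 - A * (u * (u + 2 * k)) =
          (k * (1 - γ + γ * a) - M * b) ^ 2
            + 2 * γ * (1 - γ) * (M ^ 2 - k ^ 2) * (a * (1 - a)) := by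
        rw [hGst, hAdef, ← hsa, ← htb, hMdef]; ring
      have hpos : 0 < (k * (1 - γ + γ * a) - M * b) ^ 2
            + 2 * γ * (1 - γ) * (M ^ 2 - k ^ 2) * (a * (1 - a)) := by
        rcases eq_or_lt_of_le ha1 with hae | hae
        · -- a = 1, so s = 1 and t ≠ tu u
          have hse : s = 1 := by rw [← hsa, hae]; norm_num
          have htne : t ≠ tu u := by
            intro h
            exact hne (by rw [hse, h])
          have hbne : b ≠ k / M := by
            intro h
            exact htne (by rw [← htb, h, htu1])
          have h2 : k * (1 - γ + γ * a) - M * b ≠ 0 := by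
            rw [hae]
            intro h
            apply hbne
            field_simp
            linarith [h]
          have h3 : 0 < (k * (1 - γ + γ * a) - M * b) ^ 2 :=
            lt_of_le_of_ne (sq_nonneg _) (Ne.symm (pow_ne_zero 2 h2))
          have h4 : (0:ℝ) ≤ 2 * γ * (1 - γ) * (M ^ 2 - k ^ 2) * (a * (1 - a)) := by
            have e1 : (0:ℝ) ≤ (M - k) * (M + k) :=
              mul_nonneg (by linarith) (by linarith)
            have e2 : (0:ℝ) ≤ a * (1 - a) := mul_nonneg ha0.le (by linarith)
            have e3 : (0:ℝ) ≤ (γ * (1 - γ)) * (((M - k) * (M + k)) * (a * (1 - a))) :=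
              mul_nonneg (mul_pos hγ0 h1γ).le (mul_nonneg e1 e2)
            calc (0:ℝ) ≤ 2 * ((γ * (1 - γ)) * (((M - k) * (M + k)) * (a * (1 - a)))) :=
                  mul_nonneg (by norm_num) e3
              _ = 2 * γ * (1 - γ) * (M ^ 2 - k ^ 2) * (a * (1 - a)) := by ring
          linarith
        · -- a < 1
          have p1 : 0 < γ * (1 - γ) := mul_pos hγ0 h1γ
          have p2 : 0 < (M - k) * (M + k) := mul_pos (by linarith) (by linarith)
          have p3 : 0 < a * (1 - a) := mul_pos ha0 (by linarith)
          have q : 0 < (γ * (1 - γ)) * (((M - k) * (M + k)) * (a * (1 - a))) :=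
            mul_pos p1 (mul_pos p2 p3)
          have q2 : 0 < 2 * γ * (1 - γ) * (M ^ 2 - k ^ 2) * (a * (1 - a)) := by
            calc (0:ℝ) < 2 * ((γ * (1 - γ)) * (((M - k) * (M + k)) * (a * (1 - a)))) :=
                  mul_pos two_pos q
              _ = 2 * γ * (1 - γ) * (M ^ 2 - k ^ 2) * (a * (1 - a)) := by ring
          exact add_pos_of_nonneg_of_pos (sq_nonneg _) q2
      linarith [hid ▸ hpos]
    rw [hF_lhs, hF_rhs, div_lt_div_iff₀ hGpos hGtop_pos]
    have hnn : 0 ≤ Real.sqrt (C * (1 - tu u)) * G u s t :=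
      mul_nonneg (Real.sqrt_nonneg _) hGpos.le
    refine lt_of_pow_lt_pow_left₀ 2 hnn ?_
    rw [mul_pow, mul_pow, Real.sq_sqrt (mul_pos hC0 hA).le,
      Real.sq_sqrt (mul_pos hC0 hAstar).le, hGid]
    have hstep : C * (1 - tu u) * (A * (u * (u + 2 * k)))
        < C * (1 - tu u) * (G u s t) ^ 2 :=
      mul_lt_mul_of_pos_left hmain (mul_pos hC0 hAstar)
    calc C * A * (u * (u + 2 * k) * (1 - tu u))
        = C * (1 - tu u) * (A * (u * (u + 2 * k))) := by ring
      _ < C * (1 - tu u) * (G u s t) ^ 2 := hstep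
end

section
/- For δ > 0, c > 0, σ > 0, the function u ↦ Ψ((√2/σ)√(δu² + 2cu)) satisfies Ψ((√2/σ)√(δu² + 2cu)) ~ Ψ((√2(δu + c))/(σ√δ)) as u → ∞, where Ψ is the standard normal survival function. -/
open Filter MeasureTheory Set

/-- The standard normal survival function `Ψ(x) = ∫_x^∞ (2π)^{−1/2} e^{−v²/2} dv`. -/
noncomputable def stdNormalSurvival (x : ℝ) : ℝ :=
  ∫ v in Set.Ici x, Real.exp (-v ^ 2 / 2) / Real.sqrt (2 * Real.pi)


lemma int_gauss (x : ℝ) : IntegrableOn (fun v : ℝ => Real.exp (-v ^ 2 / 2)) (Ioi x) := by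
  have := integrable_exp_neg_mul_sq (b := (1/2 : ℝ)) (by norm_num)
  have h : (fun v : ℝ => Real.exp (-v ^ 2 / 2)) = fun v : ℝ => Real.exp (-(1/2) * v ^ 2) := by
    funext v; ring_nf
  rw [h]; exact this.integrableOn

lemma hderiv_exp (v : ℝ) :
    HasDerivAt (fun w : ℝ => -Real.exp (-w ^ 2 / 2)) (v * Real.exp (-v ^ 2 / 2)) v := by
  have h1 : HasDerivAt (fun w : ℝ => -w ^ 2 / 2) (-v) v := by
    have := ((hasDerivAt_pow 2 v).neg).div_const 2
    simpa using this.congr_deriv (by ring)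
  have := (h1.exp).neg
  exact this.congr_deriv (by ring)

lemma int_id_gauss (x : ℝ) (hx : 0 < x) :
    ∫ v in Ioi x, v * Real.exp (-v ^ 2 / 2) = Real.exp (-x ^ 2 / 2) := by
  have hi : IntegrableOn (fun v : ℝ => v * Real.exp (-v ^ 2 / 2)) (Ioi x) := by
    have := integrable_rpow_mul_exp_neg_mul_sq (b := (1/2 : ℝ)) (by norm_num) (s := 1) (by norm_num)
    have h : (fun v : ℝ => v ^ (1:ℝ) * Real.exp (-(1/2) * v ^ 2)) = fun v : ℝ => v * Real.exp (-v ^ 2 / 2) := by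
      funext v; rw [Real.rpow_one]; ring_nf
    rw [h] at this; exact this.integrableOn
  have := integral_Ioi_of_hasDerivAt_of_tendsto' (f := fun w : ℝ => -Real.exp (-w ^ 2 / 2)) (m := 0)
    (fun v _ => hderiv_exp v) hi ?_
  · simpa using this
  · have : Tendsto (fun w : ℝ => Real.exp (-w ^ 2 / 2)) atTop (nhds 0) := by
      have h2 : Tendsto (fun w : ℝ => -w ^ 2 / 2) atTop atBot := by
        apply Tendsto.atBot_div_const (by norm_num)
        exact tendsto_neg_atBot_iff.mpr (tendsto_pow_atTop (by norm_num))
      exact Real.tendsto_exp_atBot.comp h2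
    simpa using this.neg

lemma exp_tendsto_zero : Tendsto (fun w : ℝ => Real.exp (-w ^ 2 / 2)) atTop (nhds 0) := by
  have h2 : Tendsto (fun w : ℝ => -w ^ 2 / 2) atTop atBot := by
    apply Tendsto.atBot_div_const (by norm_num)
    exact tendsto_neg_atBot_iff.mpr (tendsto_pow_atTop (by norm_num))
  exact Real.tendsto_exp_atBot.comp h2

lemma hderiv_lower (v : ℝ) (hv : v ≠ 0) :
    HasDerivAt (fun w : ℝ => -((1/w - 1/w^3) * Real.exp (-w ^ 2 / 2)))
      ((1 - 3/v^4) * Real.exp (-v ^ 2 / 2)) v := by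
  have h1 : HasDerivAt (fun w : ℝ => 1/w) (-(v^2)⁻¹) v := by
    simpa [one_div] using hasDerivAt_inv hv
  have h2 : HasDerivAt (fun w : ℝ => 1/w^3) (-(3 * v^2) / (v^3)^2) v := by
    have := (hasDerivAt_pow 3 v).inv (pow_ne_zero 3 hv)
    simp only [one_div]; exact this
  have h3 : HasDerivAt (fun w : ℝ => Real.exp (-w ^ 2 / 2)) (Real.exp (-v ^ 2 / 2) * (-v)) v := by
    have h0 : HasDerivAt (fun w : ℝ => -w ^ 2 / 2) (-v) v := by
      have := ((hasDerivAt_pow 2 v).neg).div_const 2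
      simpa using this.congr_deriv (by ring)
    exact h0.exp
  have := ((h1.sub h2).mul h3).neg
  apply this.congr_deriv
  simp only [Pi.sub_apply]
  field_simp
  ring

lemma int_lower_gauss (x : ℝ) (hx : 0 < x) :
    ∫ v in Ioi x, (1 - 3/v^4) * Real.exp (-v ^ 2 / 2)
      = (1/x - 1/x^3) * Real.exp (-x ^ 2 / 2) := by
  have hi : IntegrableOn (fun v : ℝ => (1 - 3/v^4) * Real.exp (-v ^ 2 / 2)) (Ioi x) := by
    apply Integrable.mono' (((int_gauss x).const_mul (1 + 3/x^4)))
    · apply Measurable.aestronglyMeasurable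
      measurability
    · filter_upwards [ae_restrict_mem measurableSet_Ioi] with v hv
      have hvx : x ≤ v := le_of_lt hv
      have hv0 : 0 < v := lt_of_lt_of_le hx hvx
      have hb : |1 - 3/v^4| ≤ 1 + 3/x^4 := by
        have h4 : 3/v^4 ≤ 3/x^4 := by
          gcongr
        have h5 : (0:ℝ) < 3/v^4 := by positivity
        rw [abs_le]; constructor <;> nlinarith
      have : ‖(1 - 3/v^4) * Real.exp (-v ^ 2 / 2)‖ = |1 - 3/v^4| * Real.exp (-v ^ 2 / 2) := by
        rw [norm_mul, Real.norm_eq_abs, Real.norm_eq_abs, abs_of_pos (Real.exp_pos _)]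
      rw [this]
      exact mul_le_mul_of_nonneg_right hb (le_of_lt (Real.exp_pos _))
  have := integral_Ioi_of_hasDerivAt_of_tendsto'
    (f := fun w : ℝ => -((1/w - 1/w^3) * Real.exp (-w ^ 2 / 2))) (m := 0)
    (fun v hv => hderiv_lower v (ne_of_gt (lt_of_lt_of_le hx hv))) hi ?_
  · rw [this]; ring
  · have ha : Tendsto (fun w : ℝ => 1/w) atTop (nhds 0) := by
      simpa [one_div] using tendsto_inv_atTop_zero
    have hb : Tendsto (fun w : ℝ => 1/w^3) atTop (nhds 0) := by
      have := (tendsto_pow_atTop (by norm_num : (3:ℕ) ≠ 0) : Tendsto (fun w : ℝ => w^3) atTop atTop).inv_tendsto_atTop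
      simp only [one_div]; exact this
    have h1 : Tendsto (fun w : ℝ => 1/w - 1/w^3) atTop (nhds 0) := by
      simpa using ha.sub hb
    simpa using (h1.mul exp_tendsto_zero).neg

lemma sqrt_tendsto_atTop : Tendsto Real.sqrt atTop atTop :=
  (tendsto_rpow_atTop (by norm_num : (0:ℝ) < 1/2)).congr fun x => (Real.sqrt_eq_rpow x).symm

noncomputable def millD (x : ℝ) : ℝ := Real.exp (-x ^ 2 / 2) / (x * Real.sqrt (2 * Real.pi))
noncomputable def millG (x : ℝ) : ℝ := stdNormalSurvival x / millD x

lemma psi_eq (x : ℝ) :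
    stdNormalSurvival x = (∫ v in Ioi x, Real.exp (-v ^ 2 / 2)) / Real.sqrt (2 * Real.pi) := by
  rw [stdNormalSurvival, MeasureTheory.integral_Ici_eq_integral_Ioi, integral_div]

lemma millD_pos {x : ℝ} (hx : 0 < x) : 0 < millD x := by
  have := Real.sqrt_pos.mpr (by positivity : (0:ℝ) < 2 * Real.pi)
  unfold millD; positivity

lemma psi_upper (x : ℝ) (hx : 0 < x) : stdNormalSurvival x ≤ millD x := by
  have hi : IntegrableOn (fun v : ℝ => v / x * Real.exp (-v ^ 2 / 2)) (Ioi x) := by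
    have := integrable_rpow_mul_exp_neg_mul_sq (b := (1/2 : ℝ)) (by norm_num) (s := 1) (by norm_num)
    have h : (fun v : ℝ => v ^ (1:ℝ) * Real.exp (-(1/2) * v ^ 2)) = fun v : ℝ => v * Real.exp (-v ^ 2 / 2) := by
      funext v; rw [Real.rpow_one]; ring_nf
    rw [h] at this
    have h2 : (fun v : ℝ => v / x * Real.exp (-v ^ 2 / 2))
        = fun v : ℝ => x⁻¹ * (v * Real.exp (-v ^ 2 / 2)) := by funext v; ring
    rw [h2]; exact (this.const_mul _).integrableOn
  have h1 : ∫ v in Ioi x, Real.exp (-v ^ 2 / 2) ≤ ∫ v in Ioi x, v / x * Real.exp (-v ^ 2 / 2) := by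
    apply setIntegral_mono_on (int_gauss x) hi measurableSet_Ioi
    intro v hv
    have h2 : (1:ℝ) ≤ v / x := (one_le_div hx).mpr (le_of_lt hv)
    nlinarith [Real.exp_pos (-v ^ 2 / 2)]
  have h2 : ∫ v in Ioi x, v / x * Real.exp (-v ^ 2 / 2) = Real.exp (-x ^ 2 / 2) / x := by
    have h3 : (fun v : ℝ => v / x * Real.exp (-v ^ 2 / 2))
        = fun v : ℝ => x⁻¹ * (v * Real.exp (-v ^ 2 / 2)) := by funext v; ring
    rw [h3, integral_const_mul, int_id_gauss x hx]; ring
  rw [psi_eq, millD]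
  rw [h2] at h1
  have hs : 0 < Real.sqrt (2 * Real.pi) := Real.sqrt_pos.mpr (by positivity)
  calc (∫ v in Ioi x, Real.exp (-v ^ 2 / 2)) / Real.sqrt (2 * Real.pi)
      ≤ (Real.exp (-x ^ 2 / 2) / x) / Real.sqrt (2 * Real.pi) := by gcongr
    _ = Real.exp (-x ^ 2 / 2) / (x * Real.sqrt (2 * Real.pi)) := by rw [div_div]

lemma psi_lower (x : ℝ) (hx : 0 < x) : (1 - 1/x^2) * millD x ≤ stdNormalSurvival x := by
  have hi : IntegrableOn (fun v : ℝ => (1 - 3/v^4) * Real.exp (-v ^ 2 / 2)) (Ioi x) := by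
    apply Integrable.mono' (((int_gauss x).const_mul (1 + 3/x^4)))
    · apply Measurable.aestronglyMeasurable; measurability
    · filter_upwards [ae_restrict_mem measurableSet_Ioi] with v hv
      have hvx : x ≤ v := le_of_lt hv
      have hv0 : 0 < v := lt_of_lt_of_le hx hvx
      have hb : |1 - 3/v^4| ≤ 1 + 3/x^4 := by
        have h4 : 3/v^4 ≤ 3/x^4 := by gcongr
        have h5 : (0:ℝ) < 3/v^4 := by positivity
        rw [abs_le]; constructor <;> nlinarith
      have he : ‖(1 - 3/v^4) * Real.exp (-v ^ 2 / 2)‖ = |1 - 3/v^4| * Real.exp (-v ^ 2 / 2) := by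
        rw [norm_mul, Real.norm_eq_abs, Real.norm_eq_abs, abs_of_pos (Real.exp_pos _)]
      rw [he]
      exact mul_le_mul_of_nonneg_right hb (le_of_lt (Real.exp_pos _))
  have h1 : ∫ v in Ioi x, (1 - 3/v^4) * Real.exp (-v ^ 2 / 2)
      ≤ ∫ v in Ioi x, Real.exp (-v ^ 2 / 2) := by
    apply setIntegral_mono_on hi (int_gauss x) measurableSet_Ioi
    intro v hv
    have hv0 : 0 < v := lt_trans hx hv
    have h5 : (0:ℝ) < 3/v^4 := by positivity
    nlinarith [Real.exp_pos (-v ^ 2 / 2)]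
  rw [int_lower_gauss x hx] at h1
  rw [psi_eq, millD]
  have hs : 0 < Real.sqrt (2 * Real.pi) := Real.sqrt_pos.mpr (by positivity)
  have key : (1 - 1/x^2) * (Real.exp (-x ^ 2 / 2) / (x * Real.sqrt (2 * Real.pi)))
      = ((1/x - 1/x^3) * Real.exp (-x ^ 2 / 2)) / Real.sqrt (2 * Real.pi) := by
    field_simp
  rw [key]
  gcongr

lemma millG_tendsto : Tendsto millG atTop (nhds 1) := by
  apply tendsto_of_tendsto_of_tendsto_of_le_of_le' (g := fun x : ℝ => 1 - 1/x^2) (h := fun _ : ℝ => (1:ℝ))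
  · have : Tendsto (fun x : ℝ => 1/x^2) atTop (nhds 0) := by
      have := (tendsto_pow_atTop (by norm_num : (2:ℕ) ≠ 0) : Tendsto (fun w : ℝ => w^2) atTop atTop).inv_tendsto_atTop
      simp only [one_div]; exact this
    simpa using tendsto_const_nhds.sub this
  · exact tendsto_const_nhds
  · filter_upwards [eventually_gt_atTop (0:ℝ)] with x hx
    exact (le_div_iff₀ (millD_pos hx)).mpr (psi_lower x hx)
  · filter_upwards [eventually_gt_atTop (0:ℝ)] with x hx
    exact (div_le_one (millD_pos hx)).mpr (psi_upper x hx)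

/-- For `δ, c, σ > 0`,
`Ψ((√2/σ)√(δu² + 2cu)) ~ Ψ((√2(δu + c))/(σ√δ))` as `u → ∞`, up to the explicit
constant factor: the ratio tends to `e^{c²/(σ²δ)}`. -/
theorem survival_ratio_limit (δ c σ : ℝ) (hδ : 0 < δ) (hc : 0 < c) (hσ : 0 < σ) :
    Tendsto
      (fun u : ℝ =>
        stdNormalSurvival (Real.sqrt 2 / σ * Real.sqrt (δ * u ^ 2 + 2 * c * u)) /
          stdNormalSurvival (Real.sqrt 2 * (δ * u + c) / (σ * Real.sqrt δ)))
      atTop (nhds (Real.exp (c ^ 2 / (σ ^ 2 * δ)))) := by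

  set a : ℝ → ℝ := fun u => Real.sqrt 2 / σ * Real.sqrt (δ * u ^ 2 + 2 * c * u) with ha_def
  set b : ℝ → ℝ := fun u => Real.sqrt 2 * (δ * u + c) / (σ * Real.sqrt δ) with hb_def
  have hs2 : (0:ℝ) < Real.sqrt 2 := Real.sqrt_pos.mpr two_pos
  have hsδ : (0:ℝ) < Real.sqrt δ := Real.sqrt_pos.mpr hδ
  have hA : Tendsto (fun u : ℝ => δ * u ^ 2 + 2 * c * u) atTop atTop := by
    have h1 : Tendsto (fun u : ℝ => 2 * c * u) atTop atTop :=
      tendsto_id.const_mul_atTop (by positivity)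
    apply tendsto_atTop_mono' _ _ h1
    filter_upwards [eventually_ge_atTop (0:ℝ)] with u hu
    nlinarith
  have ha_top : Tendsto a atTop atTop := by
    have := sqrt_tendsto_atTop.comp hA
    exact this.const_mul_atTop (by positivity)
  have hb_top : Tendsto b atTop atTop := by
    have h1 : Tendsto (fun u : ℝ => δ * u + c) atTop atTop :=
      tendsto_atTop_add_const_right _ c (tendsto_id.const_mul_atTop hδ)
    have h2 := h1.const_mul_atTop (show (0:ℝ) < Real.sqrt 2 / (σ * Real.sqrt δ) by positivity)
    apply h2.congr
    intro u
    simp only [hb_def]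
    ring
  have hapos : ∀ u : ℝ, 0 < u → 0 < a u := by
    intro u hu
    have : (0:ℝ) < δ * u ^ 2 + 2 * c * u := by nlinarith
    have := Real.sqrt_pos.mpr this
    simp only [ha_def]
    positivity
  have hbpos : ∀ u : ℝ, 0 < u → 0 < b u := by
    intro u hu
    have h1 : (0:ℝ) < δ * u + c := by nlinarith
    simp only [hb_def]
    positivity
  have hsq : ∀ u : ℝ, 0 < u → (b u) ^ 2 = (a u) ^ 2 + 2 * (c ^ 2 / (σ ^ 2 * δ)) := by
    intro u hu
    have hpos : (0:ℝ) ≤ δ * u ^ 2 + 2 * c * u := by nlinarith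
    simp only [ha_def, hb_def]
    have e2 : Real.sqrt 2 ^ 2 = 2 := Real.sq_sqrt (by norm_num)
    have eA : Real.sqrt (δ * u ^ 2 + 2 * c * u) ^ 2 = δ * u ^ 2 + 2 * c * u := Real.sq_sqrt hpos
    have eδ : Real.sqrt δ ^ 2 = δ := Real.sq_sqrt hδ.le
    simp only [mul_pow, div_pow, e2, eA, eδ]
    field_simp
    ring
  have hba : Tendsto (fun u => b u / a u) atTop (nhds 1) := by
    have h2 : Tendsto (fun u => (a u) ^ 2) atTop atTop :=
      (tendsto_pow_atTop (by norm_num : (2:ℕ) ≠ 0)).comp ha_top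
    have h3 : Tendsto (fun u => 2 * (c ^ 2 / (σ ^ 2 * δ)) / (a u) ^ 2) atTop (nhds 0) := by
      have := h2.inv_tendsto_atTop.const_mul (2 * (c ^ 2 / (σ ^ 2 * δ)))
      simpa [div_eq_mul_inv] using this
    have h4 : Tendsto (fun u => 1 + 2 * (c ^ 2 / (σ ^ 2 * δ)) / (a u) ^ 2) atTop (nhds 1) := by
      simpa using tendsto_const_nhds.add h3
    have h5 := (Real.continuous_sqrt.tendsto 1).comp h4
    rw [Real.sqrt_one] at h5
    apply h5.congr'
    filter_upwards [eventually_gt_atTop (0:ℝ)] with u hu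
    have ha0 := hapos u hu
    have hb0 := hbpos u hu
    have : 1 + 2 * (c ^ 2 / (σ ^ 2 * δ)) / (a u) ^ 2 = (b u / a u) ^ 2 := by
      rw [div_pow, hsq u hu]
      field_simp
    simp only [Function.comp]
    rw [this, Real.sqrt_sq (by positivity)]
  have hGa : Tendsto (fun u => millG (a u)) atTop (nhds 1) := millG_tendsto.comp ha_top
  have hGb : Tendsto (fun u => millG (b u)) atTop (nhds 1) := millG_tendsto.comp hb_top
  have key : ∀ᶠ u in atTop,
      (millG (a u) / millG (b u)) * ((b u / a u) * Real.exp (c ^ 2 / (σ ^ 2 * δ)))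
        = stdNormalSurvival (a u) / stdNormalSurvival (b u) := by
    filter_upwards [eventually_gt_atTop (0:ℝ)] with u hu
    have ha0 := hapos u hu
    have hb0 := hbpos u hu
    have hDa := millD_pos ha0
    have hDb := millD_pos hb0
    have h1 : stdNormalSurvival (a u) = millG (a u) * millD (a u) :=
      (div_mul_cancel₀ _ (ne_of_gt hDa)).symm
    have h2 : stdNormalSurvival (b u) = millG (b u) * millD (b u) :=
      (div_mul_cancel₀ _ (ne_of_gt hDb)).symm
    rw [h1, h2, mul_div_mul_comm]
    congr 1
    have hexp : Real.exp (c ^ 2 / (σ ^ 2 * δ))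
        = Real.exp (-(a u) ^ 2 / 2) / Real.exp (-(b u) ^ 2 / 2) := by
      rw [← Real.exp_sub]
      congr 1
      have := hsq u hu
      linarith
    rw [millD, millD, hexp]
    have hs : (0:ℝ) < Real.sqrt (2 * Real.pi) := Real.sqrt_pos.mpr (by positivity)
    have hea := Real.exp_pos (-(a u) ^ 2 / 2)
    have heb := Real.exp_pos (-(b u) ^ 2 / 2)
    field_simp
  apply Tendsto.congr' key
  have h : Tendsto (fun x => millG (a x) / millG (b x) * (b x / a x * Real.exp (c ^ 2 / (σ ^ 2 * δ))))
      atTop (nhds (1 / 1 * (1 * Real.exp (c ^ 2 / (σ ^ 2 * δ))))) :=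
    (hGa.div hGb one_ne_zero).mul (hba.mul tendsto_const_nhds)
  norm_num at h
  exact h
end

section
/- For γ ∈ (0,1), δ > 0, c > 0 and u > 0 with t_u = (c/(δu+c))², the quantity D(s,t) := (G_u(s,t)·V_Z(1,t_u))² − (G_u(1,t_u)·V_Z(s,t))², where G_u(s,t) = (u+c/δ)(1−γ(1−√s)) − (c/δ)√t and V_Z²(s,t) = (σ²/(2δ))((1−t) − γ(2−γ)(1−s)), satisfies D(s,t) ~ (σ²/(2δ))·u²·((√t − √t_u)² + γ(1−γ)(1−s)) as u → ∞ uniformly for (s,t) → (1, t_u); in particular, at s = 1 the leading term is (σ²/(2δ))u²(√t − √t_u)². -/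
set_option maxHeartbeats 1000000

private lemma Bbound (γ u a x τ C ε : ℝ) (hγ0 : 0 < γ) (hγ1 : γ < 1) (ha0 : 0 < a)
    (hu1 : 1 ≤ u) (hx0 : 0 ≤ x) (hx1 : x ≤ 1) (hτ0 : 0 ≤ τ) (hτ1 : τ ≤ 1)
    (hC0 : 0 ≤ C) (hC1 : C ≤ 1) (hε : 0 < ε) (hηx : 1 - x ≤ ε*(1-γ)/4) :
    |(1-γ)*(u^2*(x-1) + 4*u*a*x) + C*(2*(u+a)*a*τ - a^2*(2-γ)*(1+x))|
      ≤ u^2*(ε*(1-γ)/4) + 6*u*a + 6*a^2 := by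
  have hγ1' : (0:ℝ) < 1 - γ := by linarith
  have hu0 : (0:ℝ) < u := by linarith
  have hM0 : (0:ℝ) < u + a := by linarith
  have h1x : (0:ℝ) ≤ 1 - x := by linarith
  have hgx : (0:ℝ) ≤ 1 - (1-γ)*x := by nlinarith [mul_nonneg hγ0.le hx0]
  have hCτ : C*τ ≤ 1 := by nlinarith [mul_le_mul_of_nonneg_left hτ1 hC0]
  have t1 : (1-γ)*(u^2*(x-1) + 4*u*a*x) ≤ 4*u*a := by
    nlinarith [mul_nonneg (mul_nonneg hγ1'.le (sq_nonneg u)) h1x,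
      mul_nonneg (mul_nonneg hu0.le ha0.le) hgx]
  have hpos : (0:ℝ) ≤ a^2*(2-γ)*(1+x) :=
    mul_nonneg (mul_nonneg (sq_nonneg a) (by linarith)) (by linarith)
  have t2 : C*(2*(u+a)*a*τ - a^2*(2-γ)*(1+x)) ≤ 2*(u+a)*a := by
    nlinarith [mul_le_mul_of_nonneg_left hCτ
        (show (0:ℝ) ≤ 2*(u+a)*a by positivity),
      mul_nonneg hC0 hpos]
  have t3 : -(u^2*(ε*(1-γ)/4)) ≤ (1-γ)*(u^2*(x-1) + 4*u*a*x) := by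
    nlinarith [mul_le_mul_of_nonneg_left (mul_le_mul_of_nonneg_left hηx hγ1'.le)
        (sq_nonneg u),
      mul_nonneg (mul_nonneg (mul_nonneg hγ0.le hγ1'.le) hε.le) (sq_nonneg u),
      mul_nonneg (mul_nonneg (mul_nonneg hγ1'.le (by linarith : (0:ℝ) ≤ 4*u)) ha0.le) hx0]
  have h24 : (2-γ)*(1+x) ≤ 4 := by nlinarith [mul_nonneg hγ0.le hx0]
  have t4 : -(4*a^2) ≤ C*(2*(u+a)*a*τ - a^2*(2-γ)*(1+x)) := by
    nlinarith [mul_nonneg hC0 (mul_nonneg (mul_nonneg (by positivity : (0:ℝ) ≤ 2*(u+a)) ha0.le) hτ0),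
      mul_le_mul hC1 (mul_le_mul_of_nonneg_left h24 (sq_nonneg a))
        (by nlinarith [hpos] : (0:ℝ) ≤ a^2*((2-γ)*(1+x))) zero_le_one]
  have hua : (0:ℝ) ≤ u*a := mul_nonneg hu0.le ha0.le
  have hq : (0:ℝ) ≤ u^2*(ε*(1-γ)/4) := by positivity
  rw [abs_le]
  constructor
  · nlinarith [t3, t4]
  · nlinarith [t1, t2]

private lemma Nbound (γ u a x ε p q B : ℝ) (hγ0 : 0 < γ) (hγ1 : γ < 1) (ha0 : 0 < a)
    (hu1 : 1 ≤ u) (hx0 : 0 ≤ x) (hx1 : x ≤ 1) (hp0 : 0 ≤ p)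
    (hq : q = γ*(1-γ)*(1-x^2)) (hε : 0 < ε)
    (h1 : 8*a ≤ ε*u) (h2 : 12*(a+a^2) ≤ ε*(1-γ)*u)
    (hB : |B| ≤ u^2*(ε*(1-γ)/4) + 6*u*a + 6*a^2) :
    |2*u*a*p + γ*(1-x)*B| ≤ ε*(u^2*(p+q)) := by
  have hγ1' : (0:ℝ) < 1 - γ := by linarith
  have hu0 : (0:ℝ) < u := by linarith
  have hBb0 : (0:ℝ) ≤ u^2*(ε*(1-γ)/4) + 6*u*a + 6*a^2 := by positivity
  have h0 : (0:ℝ) ≤ γ*(1-x) := mul_nonneg hγ0.le (by linarith)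
  have hq0 : (0:ℝ) ≤ q := by
    rw [hq]
    apply mul_nonneg (mul_nonneg hγ0.le hγ1'.le)
    nlinarith
  have habs : |2*u*a*p + γ*(1-x)*B|
      ≤ 2*u*a*p + γ*(1-x)*(u^2*(ε*(1-γ)/4) + 6*u*a + 6*a^2) := by
    calc |2*u*a*p + γ*(1-x)*B| ≤ |2*u*a*p| + |γ*(1-x)*B| := abs_add_le _ _
      _ = 2*u*a*p + γ*(1-x)*|B| := by
          rw [abs_of_nonneg (by positivity : (0:ℝ) ≤ 2*u*a*p), abs_mul,
            abs_of_nonneg h0]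
      _ ≤ 2*u*a*p + γ*(1-x)*(u^2*(ε*(1-γ)/4) + 6*u*a + 6*a^2) := by
          nlinarith [mul_le_mul_of_nonneg_left hB h0]
  have key2 : 2*u*a*p ≤ ε*u^2*p := by
    apply mul_le_mul_of_nonneg_right _ hp0
    nlinarith [mul_le_mul_of_nonneg_right h1 hu0.le]
  have key3 : (1-γ)*(γ*(1-x)*(u^2*(ε*(1-γ)/4) + 6*u*a + 6*a^2))
      ≤ q*(u^2*(ε*(1-γ)/4) + 6*u*a + 6*a^2) := by
    rw [hq]
    nlinarith [mul_nonneg (mul_nonneg (mul_nonneg (mul_nonneg hγ0.le hγ1'.le) hBb0)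
      hx0) (by linarith : (0:ℝ) ≤ 1 - x)]
  have key4 : u^2*(ε*(1-γ)/4) + 6*u*a + 6*a^2 ≤ (1-γ)*ε*u^2 := by
    nlinarith [mul_le_mul_of_nonneg_right h2 hu0.le,
      mul_nonneg (sq_nonneg a) (by linarith : (0:ℝ) ≤ u - 1)]
  have key5 : q*(u^2*(ε*(1-γ)/4) + 6*u*a + 6*a^2) ≤ q*((1-γ)*ε*u^2) :=
    mul_le_mul_of_nonneg_left key4 hq0
  have main : (1-γ)*(2*u*a*p + γ*(1-x)*(u^2*(ε*(1-γ)/4) + 6*u*a + 6*a^2))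
      ≤ (1-γ)*(ε*(u^2*(p+q))) := by
    nlinarith [mul_le_mul_of_nonneg_left key2 hγ1'.le, key3, key5]
  have habs' := mul_le_mul_of_nonneg_left habs hγ1'.le
  have := le_of_mul_le_mul_left (by linarith : (1-γ)*|2*u*a*p + γ*(1-x)*B|
    ≤ (1-γ)*(ε*(u^2*(p+q)))) hγ1'
  linarith [this]

/-- With `t_u = (c/(δu+c))²`,
`D(s,t) = (G_u(s,t)V_Z(1,t_u))² − (G_u(1,t_u)V_Z(s,t))²` satisfies
`D(s,t) ~ (σ²/(2δ))u²((√t − √t_u)² + γ(1−γ)(1−s))` as `u → ∞` along `(s,t) → (1,t_u)`: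
the ratio is within `ε` of `1` for `u` large and `(s,t)` close enough to `(1,t_u)`. -/
theorem D_asymptotic (γ δ c σ : ℝ) (hγ : γ ∈ Set.Ioo (0:ℝ) 1) (hδ : 0 < δ)
    (hc : 0 < c) (hσ : 0 < σ)
    (V2 : ℝ → ℝ → ℝ) (G : ℝ → ℝ → ℝ → ℝ) (tu : ℝ → ℝ) (D : ℝ → ℝ → ℝ → ℝ)
    (hV2 : ∀ s t : ℝ, V2 s t = σ ^ 2 / (2 * δ) * ((1 - t) - γ * (2 - γ) * (1 - s)))
    (hG : ∀ u s t : ℝ, G u s t =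
      (u + c / δ) * (1 - γ * (1 - Real.sqrt s)) - c / δ * Real.sqrt t)
    (htu : ∀ u : ℝ, tu u = (c / (δ * u + c)) ^ 2)
    (hD : ∀ u s t : ℝ, D u s t =
      (G u s t) ^ 2 * V2 1 (tu u) - (G u 1 (tu u)) ^ 2 * V2 s t) :
    ∀ ε : ℝ, 0 < ε → ∃ u₀ : ℝ, ∃ η : ℝ, 0 < η ∧
      ∀ u : ℝ, u₀ ≤ u → ∀ s t : ℝ, 0 < t → t ≤ s → s ≤ 1 →
        1 - s ≤ η → |t - tu u| ≤ η → (s, t) ≠ ((1 : ℝ), tu u) →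
        |D u s t /
            (σ ^ 2 / (2 * δ) * u ^ 2 *
              ((Real.sqrt t - Real.sqrt (tu u)) ^ 2 + γ * (1 - γ) * (1 - s))) - 1|
          ≤ ε := by
  obtain ⟨hγ0, hγ1⟩ := hγ
  have hγ1' : 0 < 1 - γ := by linarith
  intro ε hε
  have ha0 : 0 < c / δ := div_pos hc hδ
  set a := c / δ with ha
  refine ⟨1 + 8*a/ε + 12*(a+a^2)/(ε*(1-γ)), min 1 (ε*(1-γ)/4),
    lt_min one_pos (by positivity), ?_⟩
  intro u hu s t ht0 hts hs1 hsη htη hne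
  have hu1 : (1:ℝ) ≤ u := by
    have h3 : 0 ≤ 8*a/ε := by positivity
    have h4 : 0 ≤ 12*(a+a^2)/(ε*(1-γ)) := by positivity
    linarith
  have hu0 : (0:ℝ) < u := by linarith
  have hM0 : (0:ℝ) < u + a := by linarith
  have h1 : 8*a ≤ ε*u := by
    have h4 : 0 ≤ 12*(a+a^2)/(ε*(1-γ)) := by positivity
    have h5 : 8*a/ε ≤ u := by linarith
    rw [div_le_iff₀ hε] at h5
    linarith
  have h2 : 12*(a+a^2) ≤ ε*(1-γ)*u := by
    have h3 : 0 ≤ 8*a/ε := by positivity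
    have h5 : 12*(a+a^2)/(ε*(1-γ)) ≤ u := by linarith
    rw [div_le_iff₀ (by positivity)] at h5
    linarith
  have hs0 : (0:ℝ) ≤ s := le_trans ht0.le hts
  set x := Real.sqrt s with hx
  set τ := Real.sqrt t with hτ
  have hsx : x^2 = s := Real.sq_sqrt hs0
  have htτ : τ^2 = t := Real.sq_sqrt ht0.le
  have hx0 : 0 ≤ x := Real.sqrt_nonneg s
  have hτ0 : 0 ≤ τ := Real.sqrt_nonneg t
  have hx1 : x ≤ 1 := Real.sqrt_le_one.mpr hs1
  have hτ1 : τ ≤ 1 := Real.sqrt_le_one.mpr (hts.trans hs1)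
  have hsx' : s ≤ x := by
    nlinarith [mul_nonneg hx0 (by linarith : (0:ℝ) ≤ 1 - x)]
  have hηx : 1 - x ≤ ε*(1-γ)/4 := by
    have := min_le_right (1:ℝ) (ε*(1-γ)/4)
    linarith [hsη, hsx']
  have hfrac : c/(δ*u+c) = a/(u+a) := by
    rw [ha, div_eq_div_iff (by positivity) (by positivity)]
    field_simp
  have hτu : Real.sqrt (tu u) = a/(u+a) := by
    rw [htu u, hfrac, Real.sqrt_sq (by positivity)]
  have htuval : tu u = (a/(u+a))^2 := by rw [htu u, hfrac]
  -- rewrite the goal denominator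
  rw [hτu]
  set p := (τ - a/(u+a))^2 with hpdef
  set q := γ*(1-γ)*(1-s) with hqdef
  have hqx : q = γ*(1-γ)*(1-x^2) := by rw [hqdef, hsx]
  have hp0 : 0 ≤ p := sq_nonneg _
  have hq0 : 0 ≤ q := by
    rw [hqdef]; exact mul_nonneg (mul_nonneg hγ0.le hγ1'.le) (by linarith)
  have hS0 : 0 < p + q := by
    rcases eq_or_lt_of_le hs1 with h | h
    · have hqz : q = 0 := by rw [hqdef, h]; ring
      have htne : t ≠ tu u := by
        intro hteq; exact hne (by simp [h, hteq])
      have hτne : τ - a/(u+a) ≠ 0 := by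
        intro heq
        apply htne
        rw [← htτ, show τ = a/(u+a) by linarith [sub_eq_zero.mp heq], htuval]
      have := pow_two_pos_of_ne_zero hτne
      rw [← hpdef] at this
      linarith
    · have : 0 < q := by
        rw [hqdef]; exact mul_pos (mul_pos hγ0 hγ1') (by linarith)
      linarith
  -- quantities for the exact identity
  set C := ((u+a)^2 - a^2)/(u+a)^2 with hCdef
  set B := C*(2*(u+a)^2*(1-γ)*x + 2*(u+a)*a*τ - a^2*(2-γ)*(1+x)) - u^2*(1-γ)*(1+x)
    with hBdef
  set N := 2*u*a*p + γ*(1-x)*B with hNdef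
  have hC0 : 0 ≤ C := by
    rw [hCdef]
    apply div_nonneg _ (sq_nonneg _)
    nlinarith
  have hC1 : C ≤ 1 := by
    rw [hCdef, div_le_one (by positivity)]
    nlinarith
  -- bound |B| via the alternative form
  have hBalt : B = (1-γ)*(u^2*(x-1) + 4*u*a*x)
      + C*(2*(u+a)*a*τ - a^2*(2-γ)*(1+x)) := by
    rw [hBdef, hCdef]
    have hMne : u + a ≠ 0 := hM0.ne'
    field_simp
    ring
  have hBb : |B| ≤ u^2*(ε*(1-γ)/4) + 6*u*a + 6*a^2 := by
    rw [hBalt]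
    exact Bbound γ u a x τ C ε hγ0 hγ1 ha0 hu1 hx0 hx1 hτ0 hτ1 hC0 hC1 hε hηx
  have hNfin : |N| ≤ ε*(u^2*(p+q)) := by
    rw [hNdef]
    exact Nbound γ u a x ε p q B hγ0 hγ1 ha0 hu1 hx0 hx1 hp0 hqx hε h1 h2 hBb
  -- exact identity
  have hGst : G u s t = (u+a)*(1 - γ*(1-x)) - a*τ := by
    rw [hG u s t, ← hx, ← hτ]
  have hG1 : G u 1 (tu u) = (u+a) - a*(a/(u+a)) := by
    rw [hG u 1 (tu u), Real.sqrt_one, hτu]; ring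
  have hV2tu : V2 1 (tu u) = σ^2/(2*δ) * (1 - (a/(u+a))^2) := by
    rw [hV2, htuval]; ring
  have hV2st : V2 s t = σ^2/(2*δ)*((1 - τ^2) - γ*(2-γ)*(1 - x^2)) := by
    rw [hV2, hsx, htτ]
  have hId : D u s t = σ^2/(2*δ) * (u^2*(p + q) + N) := by
    rw [hD, hGst, hG1, hV2tu, hV2st, hNdef, hpdef, hqx, hBdef, hCdef]
    have hMne : u + a ≠ 0 := hM0.ne'
    field_simp
    ring
  -- assemble
  have hratio : D u s t / (σ^2/(2*δ)*u^2*(p + q)) - 1 = N / (u^2*(p+q)) := by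
    rw [hId]
    have hKne : σ^2/(2*δ) ≠ 0 := by positivity
    have hS0' : p + q ≠ 0 := hS0.ne'
    field_simp
    ring
  rw [hratio, abs_div, abs_of_pos (by positivity : (0:ℝ) < u^2*(p+q)),
    div_le_iff₀ (by positivity : (0:ℝ) < u^2*(p+q))]
  calc |N| ≤ ε*(u^2*(p+q)) := hNfin
    _ = ε*(u^2*(p+q)) := rfl
end
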